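/- (Lemma 3.1, first part) Let g ∈ ℝ^m, let g↓ be its nonincreasing rearrangement, and let 1 ≤ k ≤ m be an integer. Let P := { y* ∈ B_k : y* minimizes ‖max(g↓ − y, 0)‖₂² over y ∈ B_k }, where the maximum is taken componentwise, and let ȳ be the (unique) minimizer of ‖g↓ − y‖₂² over y ∈ B_k, i.e., ȳ = proj_{B_k}(g↓). Then ȳ ∈ P. -/

import Mathlib

open Filter Topology Matrix

noncomputable def topkSum {ι : Type*} [Fintype ι] (k : ℕ) (x : ι → ℝ) : ℝ :=
  sSup {v : ℝ | ∃ s : Finset ι, s.card = k ∧ v = ∑ i ∈ s, x i}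

def Bk (m k : ℕ) : Set (Fin m → ℝ) := {x | topkSum k x ≤ 0}

noncomputable def sortDesc {m : ℕ} (x : Fin m → ℝ) : Fin m → ℝ :=
  fun i => (x ∘ Tuple.sort x) i.rev

noncomputable def ent {m : ℕ} (x : Fin m → ℝ) (i : ℕ) : ℝ :=
  if h : 1 ≤ i ∧ i ≤ m then x ⟨i - 1, by omega⟩ else 0

noncomputable def entE {m : ℕ} (x : Fin m → ℝ) (i : ℕ) : EReal :=
  if h : 1 ≤ i ∧ i ≤ m then ((x ⟨i - 1, by omega⟩ : ℝ) : EReal)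
  else if i = 0 then ⊤ else ⊥

def IsIndexPairOf {m : ℕ} (k : ℕ) (x : Fin m → ℝ) (k0 k1 : ℕ) : Prop :=
  k0 + 1 ≤ k ∧ k ≤ k1 ∧ k1 ≤ m ∧
  entE x (k0 + 1) < entE x k0 ∧
  (∀ i : ℕ, k0 + 1 ≤ i → i ≤ k1 → entE x i = entE x k) ∧
  entE x (k1 + 1) < entE x k1

def IsEProjOn {m : ℕ} (S : Set (Fin m → ℝ)) (y p : Fin m → ℝ) : Prop :=
  p ∈ S ∧ ∀ z ∈ S, ∑ i, (y i - p i) ^ 2 ≤ ∑ i, (y i - z i) ^ 2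

def ProjKKT {m : ℕ} (k : ℕ) (y ybar μ : Fin m → ℝ) (lam θ : ℝ) (k0 k1 : ℕ) : Prop :=
  IsIndexPairOf k ybar k0 k1 ∧
  (∀ i : Fin m, (i : ℕ) < k0 → ybar i = y i - lam ∧ μ i = 1) ∧
  (∀ i : Fin m, k0 ≤ (i : ℕ) → (i : ℕ) < k1 →
      ybar i = y i - lam * μ i ∧ ybar i = θ ∧ 0 ≤ μ i ∧ μ i ≤ 1) ∧
  (∑ i : Fin m, (if k0 ≤ (i : ℕ) ∧ (i : ℕ) < k1 then μ i else 0)) = (k : ℝ) - (k0 : ℝ) ∧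
  (∀ i : Fin m, k1 ≤ (i : ℕ) → ybar i = y i ∧ μ i = 0) ∧
  (∑ i : Fin m, (if (i : ℕ) < k0 then y i else 0)) - (k0 : ℝ) * lam + ((k : ℝ) - (k0 : ℝ)) * θ = 0 ∧
  0 < lam ∧
  (θ : EReal) < entE ybar k0 ∧ entE ybar (k1 + 1) < (θ : EReal)

noncomputable def cvar {m : ℕ} (τ : ℝ) (g : Fin m → ℝ) : ℝ :=
  ⨅ t : ℝ, t + (1 / ((1 - τ) * m)) * ∑ j, max (g j - t) 0

/-- Lemma 3.1, first part: With `g↓` the nonincreasing rearrangement of `g` and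
`ȳ = proj_{B_k}(g↓)`, the point `ȳ` also minimizes `‖max(g↓ - y, 0)‖₂²` over `y ∈ B_k`,
i.e. `ȳ ∈ P`. -/

lemma topkSum_set_eq {m k : ℕ} (x : Fin m → ℝ) :
    {v : ℝ | ∃ s : Finset (Fin m), s.card = k ∧ v = ∑ i ∈ s, x i} =
      ↑((Finset.univ.powersetCard k).image (fun s => ∑ i ∈ s, x i)) := by
  ext v
  simp only [Finset.coe_image, Set.mem_image, Finset.mem_coe, Finset.mem_powersetCard,
    Set.mem_setOf_eq]
  constructor
  · rintro ⟨s, hs, rfl⟩; exact ⟨s, ⟨Finset.subset_univ _, hs⟩, rfl⟩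
  · rintro ⟨s, ⟨_, hs⟩, rfl⟩; exact ⟨s, hs, rfl⟩

lemma topkSum_mono {m k : ℕ} (hkm : k ≤ m) {x y : Fin m → ℝ} (h : ∀ i, x i ≤ y i) :
    topkSum k x ≤ topkSum k y := by
  obtain ⟨s0, _, hs0⟩ := Finset.exists_subset_card_eq (s := (Finset.univ : Finset (Fin m))) (n := k)
    (by simpa using hkm)
  have hne : {v : ℝ | ∃ s : Finset (Fin m), s.card = k ∧ v = ∑ i ∈ s, x i}.Nonempty :=
    ⟨∑ i ∈ s0, x i, s0, hs0, rfl⟩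
  have hbdd : BddAbove {v : ℝ | ∃ s : Finset (Fin m), s.card = k ∧ v = ∑ i ∈ s, y i} := by
    rw [topkSum_set_eq]
    exact (Finset.finite_toSet _).bddAbove
  apply csSup_le hne
  rintro v ⟨s, hs, rfl⟩
  calc ∑ i ∈ s, x i ≤ ∑ i ∈ s, y i := Finset.sum_le_sum fun i _ => h i
    _ ≤ topkSum k y := le_csSup hbdd ⟨s, hs, rfl⟩

theorem proj_minimizes_hinge_obj
    (m k : ℕ) (hk1 : 1 ≤ k) (hkm : k ≤ m)
    (g ybar : Fin m → ℝ)
    (hproj : IsEProjOn (Bk m k) (sortDesc g) ybar) :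
    ybar ∈ Bk m k ∧
    ∀ z ∈ Bk m k,
      ∑ i, max (sortDesc g i - ybar i) 0 ^ 2 ≤ ∑ i, max (sortDesc g i - z i) 0 ^ 2 := by
  obtain ⟨hmem, hmin⟩ := hproj
  refine ⟨hmem, fun z hz => ?_⟩
  set gd := sortDesc g
  -- truncated point
  set z' : Fin m → ℝ := fun i => min (gd i) (z i) with hz'
  have hz'mem : z' ∈ Bk m k := by
    have : topkSum k z' ≤ topkSum k z := topkSum_mono hkm (fun i => min_le_right _ _)
    exact le_trans this hz
  have h1 : ∑ i, max (gd i - ybar i) 0 ^ 2 ≤ ∑ i, (gd i - ybar i) ^ 2 := by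
    apply Finset.sum_le_sum
    intro i _
    rcases le_total (gd i - ybar i) 0 with hle | hle
    · rw [max_eq_right hle]; simpa using sq_nonneg (gd i - ybar i)
    · rw [max_eq_left hle]
  have h2 : ∑ i, (gd i - ybar i) ^ 2 ≤ ∑ i, (gd i - z' i) ^ 2 := hmin z' hz'mem
  have h3 : ∀ i, gd i - z' i = max (gd i - z i) 0 := by
    intro i
    rcases le_total (gd i) (z i) with hle | hle
    · rw [hz'] ; simp [min_eq_left hle, max_eq_right (sub_nonpos.mpr hle)]
    · rw [hz'] ; simp [min_eq_right hle, max_eq_left (sub_nonneg.mpr hle)]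
  calc ∑ i, max (gd i - ybar i) 0 ^ 2 ≤ ∑ i, (gd i - z' i) ^ 2 := le_trans h1 h2
    _ = ∑ i, max (gd i - z i) 0 ^ 2 := by simp_rw [h3]
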